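/- Let H be a symmetric positive definite n×n real matrix, G a symmetric n×n real matrix, and 0 < a ≤ b constants such that a xᵀ H x ≤ xᵀ G x ≤ b xᵀ H x for all x ∈ ℝⁿ. Set t = 2/(a + b). Then for every x ∈ ℝⁿ, ‖x − t H⁻¹ G x‖_H ≤ ((b − a)/(a + b)) ‖x‖_H. -/

import Mathlib

open Matrix

private lemma symm_dot {n : ℕ} {A : Matrix (Fin n) (Fin n) ℝ} (hA : A.IsSymm)
    (u v : Fin n → ℝ) : u ⬝ᵥ A.mulVec v = v ⬝ᵥ A.mulVec u := by
  rw [Matrix.dotProduct_mulVec, ← Matrix.mulVec_transpose, hA.eq, dotProduct_comm]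

theorem preconditioned_contraction (n : ℕ)
    (H G : Matrix (Fin n) (Fin n) ℝ) (hH : H.PosDef) (hG : G.IsSymm)
    (a b : ℝ) (ha : 0 < a) (hab : a ≤ b)
    (hlow : ∀ x : Fin n → ℝ, a * (x ⬝ᵥ H.mulVec x) ≤ x ⬝ᵥ G.mulVec x)
    (hhigh : ∀ x : Fin n → ℝ, x ⬝ᵥ G.mulVec x ≤ b * (x ⬝ᵥ H.mulVec x)) :
    ∀ x : Fin n → ℝ,
      Real.sqrt ((x - (2 / (a + b)) • H⁻¹.mulVec (G.mulVec x)) ⬝ᵥ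
          H.mulVec (x - (2 / (a + b)) • H⁻¹.mulVec (G.mulVec x))) ≤
        (b - a) / (a + b) * Real.sqrt (x ⬝ᵥ H.mulVec x) := by
  intro x
  have hHs : H.IsSymm := by
    have := hH.isHermitian.eq
    rw [Matrix.IsSymm]
    simpa using this
  have hab0 : 0 < a + b := by linarith
  set t : ℝ := 2 / (a + b) with ht
  set w : Fin n → ℝ := H⁻¹.mulVec (G.mulVec x) with hw
  have hHw : H.mulVec w = G.mulVec x := by
    rw [hw, Matrix.mulVec_mulVec,
      Matrix.mul_nonsing_inv _ (isUnit_iff_ne_zero.2 hH.det_pos.ne'), Matrix.one_mulVec]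
  -- quadratic form helper
  have hq : ∀ z : Fin n → ℝ, 0 ≤ z ⬝ᵥ H.mulVec z := fun z => by simpa using hH.posSemidef.dotProduct_mulVec_nonneg z
  -- the PSD form m(u,v) = u⬝Gv - a u⬝Hv
  set m : (Fin n → ℝ) → (Fin n → ℝ) → ℝ := fun u v => u ⬝ᵥ G.mulVec v - a * (u ⬝ᵥ H.mulVec v) with hm
  have hm_symm : ∀ u v, m u v = m v u := by
    intro u v; simp only [hm]; rw [symm_dot hG, symm_dot hHs]
  have hm_nonneg : ∀ z, 0 ≤ m z z := fun z => by simpa [hm] using hlow z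
  -- bilinear expansion of m
  have hm_expand : ∀ (r : ℝ) (u v : Fin n → ℝ),
      m (u + r • v) (u + r • v) = m u u + 2 * r * m u v + r ^ 2 * m v v := by
    intro r u v
    simp only [hm, Matrix.mulVec_add, Matrix.mulVec_smul, dotProduct_add, add_dotProduct,
      dotProduct_smul, smul_dotProduct, smul_eq_mul]
    rw [symm_dot hG v u, symm_dot hHs v u]
    ring
  -- Cauchy-Schwarz for m
  have hCS : ∀ u v, (m u v) ^ 2 ≤ m u u * m v v := by
    intro u v
    rcases eq_or_ne (m v v) 0 with h0 | h0
    · -- degenerate: use hm_expand with discriminant idea anyway; here 2 r m u v + m u u ≥ 0 ∀ r → m u v = 0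
      have hlin : ∀ r : ℝ, 0 ≤ m u u + 2 * r * m u v := by
        intro r; have := hm_nonneg (u + r • v); rw [hm_expand r u v, h0] at this; linarith
      have : m u v = 0 := by
        by_contra hne
        have h1 := hlin (-(m u u + 1) / (2 * m u v))
        have h2 : m u u + 2 * (-(m u u + 1) / (2 * m u v)) * m u v = -1 := by
          field_simp
          ring
        linarith
      rw [this, h0]; nlinarith [hm_nonneg u]
    · have hd := discrim_le_zero (a := m v v) (b := 2 * m u v) (c := m u u) ?pos
      · rw [discrim] at hd
        nlinarith
      case pos =>
        intro r
        have := hm_nonneg (u + r • v)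
        rw [hm_expand r u v] at this
        nlinarith [this]
  -- key: w⬝Hw ≤ (a+b) x⬝Gx - ab x⬝Hx
  set v : Fin n → ℝ := w - a • x with hv
  have hHv : H.mulVec v = G.mulVec x - a • H.mulVec x := by
    rw [hv, Matrix.mulVec_sub, Matrix.mulVec_smul, hHw]
  have hvHv : v ⬝ᵥ H.mulVec v = m v x := by
    rw [hHv, hm]
    simp [dotProduct_sub, dotProduct_smul, smul_eq_mul]
  have hs_nonneg : 0 ≤ v ⬝ᵥ H.mulVec v := hq v
  have hmvv_le : m v v ≤ (b - a) * (v ⬝ᵥ H.mulVec v) := by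
    have := hhigh v; simp only [hm]; linarith
  have hkey : v ⬝ᵥ H.mulVec v ≤ (b - a) * m x x := by
    have h1 : (m v x) ^ 2 ≤ m v v * m x x := hCS v x
    rcases eq_or_lt_of_le hs_nonneg with h0 | h0
    · rw [← h0]; exact mul_nonneg (by linarith) (hm_nonneg x)
    · have hmvv : m v v ≤ (b - a) * m v x := hvHv ▸ hmvv_le
      have h2 : (v ⬝ᵥ H.mulVec v) ^ 2 ≤ (b - a) * (v ⬝ᵥ H.mulVec v) * m x x := by
        rw [hvHv]
        nlinarith [mul_le_mul_of_nonneg_right hmvv (hm_nonneg x)]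
      nlinarith
  -- unpack hkey into w form
  have hxHw : x ⬝ᵥ H.mulVec w = x ⬝ᵥ G.mulVec x := by rw [hHw]
  have hwHx : w ⬝ᵥ H.mulVec x = x ⬝ᵥ G.mulVec x := by rw [symm_dot hHs, hxHw]
  have hvexp : v ⬝ᵥ H.mulVec v
      = w ⬝ᵥ H.mulVec w - 2 * a * (x ⬝ᵥ G.mulVec x) + a ^ 2 * (x ⬝ᵥ H.mulVec x) := by
    rw [hv]
    simp only [Matrix.mulVec_sub, Matrix.mulVec_smul, sub_dotProduct, dotProduct_sub,
      smul_dotProduct, dotProduct_smul, smul_eq_mul]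
    rw [hwHx, hxHw]; ring
  have hW : w ⬝ᵥ H.mulVec w ≤ (a + b) * (x ⬝ᵥ G.mulVec x) - a * b * (x ⬝ᵥ H.mulVec x) := by
    have := hkey
    rw [hvexp] at this
    simp only [hm] at this
    nlinarith
  -- final quadratic form expansion
  set y : Fin n → ℝ := x - t • w with hy
  have hyexp : y ⬝ᵥ H.mulVec y
      = x ⬝ᵥ H.mulVec x - 2 * t * (x ⬝ᵥ G.mulVec x) + t ^ 2 * (w ⬝ᵥ H.mulVec w) := by
    rw [hy]
    simp only [Matrix.mulVec_sub, Matrix.mulVec_smul, sub_dotProduct, dotProduct_sub,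
      smul_dotProduct, dotProduct_smul, smul_eq_mul]
    rw [hwHx, hxHw]; ring
  have hfinal : y ⬝ᵥ H.mulVec y ≤ ((b - a) / (a + b)) ^ 2 * (x ⬝ᵥ H.mulVec x) := by
    have ht2 : t ^ 2 * (a + b) = 2 * t := by
      rw [ht]; field_simp
    have h3 : t ^ 2 * (w ⬝ᵥ H.mulVec w)
        ≤ t ^ 2 * ((a + b) * (x ⬝ᵥ G.mulVec x) - a * b * (x ⬝ᵥ H.mulVec x)) := by
      apply mul_le_mul_of_nonneg_left hW (sq_nonneg t)
    have hrho : 1 - t ^ 2 * (a * b) = ((b - a) / (a + b)) ^ 2 := by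
      rw [ht]; field_simp; ring
    calc y ⬝ᵥ H.mulVec y
        ≤ x ⬝ᵥ H.mulVec x - 2 * t * (x ⬝ᵥ G.mulVec x)
          + t ^ 2 * ((a + b) * (x ⬝ᵥ G.mulVec x) - a * b * (x ⬝ᵥ H.mulVec x)) := by
          rw [hyexp]; linarith
      _ = (1 - t ^ 2 * (a * b)) * (x ⬝ᵥ H.mulVec x) := by linear_combination (x ⬝ᵥ G.mulVec x) * ht2
      _ = ((b - a) / (a + b)) ^ 2 * (x ⬝ᵥ H.mulVec x) := by rw [hrho]
  calc Real.sqrt (y ⬝ᵥ H.mulVec y)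
      ≤ Real.sqrt (((b - a) / (a + b)) ^ 2 * (x ⬝ᵥ H.mulVec x)) := Real.sqrt_le_sqrt hfinal
    _ = (b - a) / (a + b) * Real.sqrt (x ⬝ᵥ H.mulVec x) := by
        rw [Real.sqrt_mul (sq_nonneg _), Real.sqrt_sq (div_nonneg (by linarith) hab0.le)]
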